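/- Let n ≥ 1, λ : Fin n → ℝ, and let J, K be finite subsets (Finsets) of Fin n. Then |Σ_{j∈J} λ_j − Σ_{k∈K} λ_k| ≤ Σ_{j} |λ_j|, and equality holds if and only if either ({j : λ_j > 0} ⊆ J∖K, {j : λ_j < 0} ⊆ K∖J, λ_j ≥ 0 for all j ∈ J∖K, and λ_j ≤ 0 for all j ∈ K∖J) or the same condition holds with the roles of J and K interchanged. -/
import Mathlib

lemma aux_g (n : ℕ) (lam : Fin n → ℝ) (J K : Finset (Fin n)) :
    ∑ j ∈ J, lam j - ∑ k ∈ K, lam k =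
      ∑ j : Fin n, ((if j ∈ J \ K then lam j else 0) - (if j ∈ K \ J then lam j else 0)) := by
  rw [Finset.sum_sub_distrib, Finset.sum_ite_mem, Finset.sum_ite_mem, Finset.univ_inter,
    Finset.univ_inter]
  have h1 : ∑ j ∈ J \ K, lam j + ∑ j ∈ J ∩ K, lam j = ∑ j ∈ J, lam j := by
    rw [← Finset.sdiff_inter_self_left J K]
    exact Finset.sum_sdiff Finset.inter_subset_left
  have h2 : ∑ j ∈ K \ J, lam j + ∑ j ∈ J ∩ K, lam j = ∑ j ∈ K, lam j := by
    rw [← Finset.sdiff_inter_self_left K J, Finset.inter_comm]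
    exact Finset.sum_sdiff Finset.inter_subset_right
  linarith
lemma aux1 (n : ℕ) (lam : Fin n → ℝ) (J K : Finset (Fin n))
    (h : ∀ j, (if j ∈ J \ K then lam j else 0) - (if j ∈ K \ J then lam j else 0) = |lam j|) :
    (∀ j, 0 < lam j → j ∈ J \ K) ∧ (∀ j, lam j < 0 → j ∈ K \ J) ∧
      (∀ j ∈ J \ K, 0 ≤ lam j) ∧ (∀ j ∈ K \ J, lam j ≤ 0) := by
  have hd : ∀ j : Fin n, j ∈ J \ K → j ∈ K \ J → False := by
    intro j h1 h2
    simp only [Finset.mem_sdiff] at h1 h2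
    exact h1.2 h2.1
  have hval : ∀ j : Fin n, ¬ j ∈ J \ K → ¬ j ∈ K \ J → lam j = 0 := by
    intro j h1 h2
    have hh := h j
    rw [if_neg h1, if_neg h2] at hh
    have : |lam j| = 0 := by linarith
    exact abs_eq_zero.mp this
  refine ⟨?_, ?_, ?_, ?_⟩
  · intro j hj
    by_contra h1
    by_cases h2 : j ∈ K \ J
    · have hh := h j
      rw [if_neg h1, if_pos h2] at hh
      have := abs_nonneg (lam j)
      rw [← hh] at this
      linarith
    · have := hval j h1 h2; linarith
  · intro j hj
    by_contra h2
    by_cases h1 : j ∈ J \ K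
    · have hh := h j
      rw [if_pos h1, if_neg h2] at hh
      rw [abs_of_neg hj] at hh
      linarith
    · have := hval j h1 h2; linarith
  · intro j h1
    have hh := h j
    have h2 : ¬ j ∈ K \ J := fun h2 => hd j h1 h2
    rw [if_pos h1, if_neg h2] at hh
    have := abs_nonneg (lam j)
    linarith
  · intro j h2
    have hh := h j
    have h1 : ¬ j ∈ J \ K := fun h1 => hd j h1 h2
    rw [if_neg h1, if_pos h2] at hh
    have := abs_nonneg (lam j)
    linarith

lemma aux2 (n : ℕ) (lam : Fin n → ℝ) (J K : Finset (Fin n))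
    (h : (∀ j, 0 < lam j → j ∈ J \ K) ∧ (∀ j, lam j < 0 → j ∈ K \ J) ∧
      (∀ j ∈ J \ K, 0 ≤ lam j) ∧ (∀ j ∈ K \ J, lam j ≤ 0)) :
    ∀ j, (if j ∈ J \ K then lam j else 0) - (if j ∈ K \ J then lam j else 0) = |lam j| := by
  obtain ⟨hp, hm, hJ, hK⟩ := h
  have hd : ∀ j : Fin n, j ∈ J \ K → j ∈ K \ J → False := by
    intro j h1 h2
    simp only [Finset.mem_sdiff] at h1 h2
    exact h1.2 h2.1
  intro j
  by_cases h1 : j ∈ J \ K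
  · have h2 : ¬ j ∈ K \ J := fun h2 => hd j h1 h2
    rw [if_pos h1, if_neg h2, abs_of_nonneg (hJ j h1)]; ring
  · by_cases h2 : j ∈ K \ J
    · rw [if_neg h1, if_pos h2, abs_of_nonpos (hK j h2)]; ring
    · have hz : lam j = 0 := by
        by_contra hz
        rcases lt_or_gt_of_ne hz with hlt | hgt
        · exact h2 (hm j hlt)
        · exact h1 (hp j hgt)
      rw [if_neg h1, if_neg h2, hz, abs_zero]; ring

/-- |Σ_{j∈J} λ_j − Σ_{k∈K} λ_k| ≤ Σ_j |λ_j|, with equality iff either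
({λ > 0} ⊆ J∖K, {λ < 0} ⊆ K∖J, λ ≥ 0 on J∖K, λ ≤ 0 on K∖J) or the same with J and K
interchanged. -/
theorem stmt17 (n : ℕ) (hn : 1 ≤ n) (lam : Fin n → ℝ) (J K : Finset (Fin n)) :
    |∑ j ∈ J, lam j - ∑ k ∈ K, lam k| ≤ ∑ j : Fin n, |lam j| ∧
    (|∑ j ∈ J, lam j - ∑ k ∈ K, lam k| = ∑ j : Fin n, |lam j| ↔
      (((∀ j, 0 < lam j → j ∈ J \ K) ∧ (∀ j, lam j < 0 → j ∈ K \ J) ∧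
          (∀ j ∈ J \ K, 0 ≤ lam j) ∧ (∀ j ∈ K \ J, lam j ≤ 0)) ∨
        ((∀ j, 0 < lam j → j ∈ K \ J) ∧ (∀ j, lam j < 0 → j ∈ J \ K) ∧
          (∀ j ∈ K \ J, 0 ≤ lam j) ∧ (∀ j ∈ J \ K, lam j ≤ 0)))) := by
  classical
  set g : Fin n → ℝ :=
    fun j => (if j ∈ J \ K then lam j else 0) - (if j ∈ K \ J then lam j else 0) with hgdef
  have key : ∑ j ∈ J, lam j - ∑ k ∈ K, lam k = ∑ j, g j := aux_g n lam J K
  have hneg : ∀ j, (if j ∈ K \ J then lam j else 0) - (if j ∈ J \ K then lam j else 0) = -g j := by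
    intro j; simp only [hgdef]; ring
  have hle : ∀ j, |g j| ≤ |lam j| := by
    intro j
    have hd : ¬ (j ∈ J \ K ∧ j ∈ K \ J) := by
      rintro ⟨h1, h2⟩
      simp only [Finset.mem_sdiff] at h1 h2
      exact h1.2 h2.1
    show |(if j ∈ J \ K then lam j else 0) - (if j ∈ K \ J then lam j else 0)| ≤ |lam j|
    by_cases h1 : j ∈ J \ K
    · have h2 : ¬ j ∈ K \ J := fun h2 => hd ⟨h1, h2⟩
      rw [if_pos h1, if_neg h2, sub_zero]
    · by_cases h2 : j ∈ K \ J
      · rw [if_neg h1, if_pos h2, zero_sub, abs_neg]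
      · rw [if_neg h1, if_neg h2, sub_zero, abs_zero]
        exact abs_nonneg _
  have ineq : |∑ j, g j| ≤ ∑ j, |lam j| :=
    (Finset.abs_sum_le_sum_abs _ _).trans (Finset.sum_le_sum fun i _ => hle i)
  rw [key]
  refine ⟨ineq, ?_, ?_⟩
  · intro heq
    rcases le_or_gt 0 (∑ j, g j) with hS | hS
    · left
      apply aux1
      have habs : ∑ j, g j = ∑ j, |lam j| := by rwa [abs_of_nonneg hS] at heq
      have hall := (Finset.sum_eq_sum_iff_of_le
        (fun i (_ : i ∈ Finset.univ) => (le_abs_self (g i)).trans (hle i))).mp habs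
      intro j; exact hall j (Finset.mem_univ j)
    · right
      apply aux1 n lam K J
      have habs : ∑ j, -g j = ∑ j, |lam j| := by
        rw [Finset.sum_neg_distrib]
        rw [abs_of_neg hS] at heq
        linarith
      have hall := (Finset.sum_eq_sum_iff_of_le
        (fun i (_ : i ∈ Finset.univ) =>
          (le_abs_self (-g i)).trans ((abs_neg (g i)) ▸ hle i))).mp habs
      intro j; rw [hneg j]; exact hall j (Finset.mem_univ j)
  · rintro (h | h)
    · have h2 := aux2 n lam J K h
      have hs : ∑ j, g j = ∑ j, |lam j| := Finset.sum_congr rfl fun j _ => h2 j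
      rw [hs, abs_of_nonneg (Finset.sum_nonneg fun j _ => abs_nonneg _)]
    · have h2 := aux2 n lam K J h
      have hs : ∑ j, g j = -∑ j, |lam j| := by
        rw [← Finset.sum_neg_distrib]
        refine Finset.sum_congr rfl fun j _ => ?_
        rw [← h2 j, hneg j]; ring
      rw [hs, abs_neg, abs_of_nonneg (Finset.sum_nonneg fun j _ => abs_nonneg _)]
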